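/- Let p ≥ 3 and k ≥ 1 be integers and a, b ∈ ℝ with 0 < b ≤ p-2 and k/2 + a + 1 > 0. For w > 0 define r(w) = w · [∫_0^1 λ^{b/2} (1-λ)^{p/2 - b/2 - 1} (1 + wλ)^{-k/2 - a - b/2 - 2} dλ] / [∫_0^1 λ^{b/2 - 1} (1-λ)^{p/2 - b/2 - 1} (1 + wλ)^{-k/2 - a - b/2 - 2} dλ]. Then r is nondecreasing on (0,∞). (Lemma 6.3, part 1.) -/

import Mathlib

open MeasureTheory Real Set

namespace RshrinkAux

lemma integrableOn_aux {c d e w : ℝ} (hc : 0 ≤ c) (hd : d ≤ 0) (he : -1 < e) (hw : 0 < w) :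
    IntegrableOn (fun t => t ^ e * (w - t) ^ c * (1 + t) ^ d) (Set.Ioo 0 w) := by
  have hbase : IntegrableOn (fun t : ℝ => t ^ e) (Set.Ioo 0 w) := by
    have h := intervalIntegral.intervalIntegrable_rpow' (a := 0) (b := w) he
    rw [intervalIntegrable_iff, uIoc_of_le hw.le] at h
    exact h.mono_set Set.Ioo_subset_Ioc_self
  have hmono : IntegrableOn (fun t : ℝ => w ^ c * t ^ e) (Set.Ioo 0 w) := hbase.const_mul _
  apply Integrable.mono' hmono
  · apply ContinuousOn.aestronglyMeasurable ?_ measurableSet_Ioo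
    apply ContinuousOn.mul
    apply ContinuousOn.mul
    · exact continuousOn_id.rpow_const fun x hx => Or.inl (ne_of_gt hx.1)
    · exact ((continuous_const.sub continuous_id).continuousOn).rpow_const
        fun x hx => Or.inl (by simpa using ne_of_gt (sub_pos.2 hx.2))
    · exact ((continuous_const.add continuous_id).continuousOn).rpow_const
        fun x hx => Or.inl (by intro h; simp at h; nlinarith [hx.1])
  · filter_upwards [ae_restrict_mem measurableSet_Ioo] with t ht
    have h0t : (0:ℝ) < t := ht.1
    have htw : t < w := ht.2
    have p1 : (0:ℝ) < t ^ e := rpow_pos_of_pos h0t e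
    have p2 : (0:ℝ) < (w - t) ^ c := rpow_pos_of_pos (by linarith) c
    have p3 : (0:ℝ) < (1 + t) ^ d := rpow_pos_of_pos (by linarith) d
    have hA : (w - t) ^ c ≤ w ^ c := rpow_le_rpow (by linarith) (by linarith) hc
    have hB : (1 + t) ^ d ≤ 1 := rpow_le_one_of_one_le_of_nonpos (by linarith) hd
    rw [Real.norm_eq_abs, abs_of_nonneg (by positivity)]
    calc t ^ e * (w - t) ^ c * (1 + t) ^ d ≤ t ^ e * (w - t) ^ c * 1 :=
        mul_le_mul_of_nonneg_left hB (by positivity)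
      _ ≤ w ^ c * t ^ e := by nlinarith [mul_le_mul_of_nonneg_left hA p1.le]

lemma Jpos {c d e w : ℝ} (hc : 0 ≤ c) (hd : d ≤ 0) (he : -1 < e) (hw : 0 < w) :
    0 < ∫ t in Set.Ioo (0:ℝ) w, t ^ e * (w - t) ^ c * (1 + t) ^ d := by
  have hnn : 0 ≤ᵐ[volume.restrict (Set.Ioo (0:ℝ) w)]
      fun t => t ^ e * (w - t) ^ c * (1 + t) ^ d := by
    filter_upwards [ae_restrict_mem measurableSet_Ioo] with t ht
    have p1 : (0:ℝ) < t ^ e := rpow_pos_of_pos ht.1 e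
    have p2 : (0:ℝ) < (w - t) ^ c := rpow_pos_of_pos (by linarith [ht.2]) c
    have p3 : (0:ℝ) < (1 + t) ^ d := rpow_pos_of_pos (by linarith [ht.1]) d
    positivity
  rw [setIntegral_pos_iff_support_of_nonneg_ae hnn (integrableOn_aux hc hd he hw)]
  refine lt_of_lt_of_le ?_ (measure_mono (fun t ht => ⟨?_, ht⟩))
  · rw [Real.volume_Ioo]
    simpa using hw
  · have p1 : (0:ℝ) < t ^ e := rpow_pos_of_pos ht.1 e
    have p2 : (0:ℝ) < (w - t) ^ c := rpow_pos_of_pos (by linarith [ht.2]) c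
    have p3 : (0:ℝ) < (1 + t) ^ d := rpow_pos_of_pos (by linarith [ht.1]) d
    exact ne_of_gt (by positivity)


lemma subst {c d e w : ℝ} (hw : 0 < w) :
    (∫ l in Set.Ioo (0:ℝ) 1, l ^ e * (1 - l) ^ c * (1 + w * l) ^ d)
      = (w ^ (e + c) * w)⁻¹ * ∫ t in Set.Ioo (0:ℝ) w, t ^ e * (w - t) ^ c * (1 + t) ^ d := by
  have hkey : (∫ x in (0:ℝ)..1, (fun t => t ^ e * (w - t) ^ c * (1 + t) ^ d) (w * x))
      = w⁻¹ • ∫ x in (0:ℝ)..w, (fun t => t ^ e * (w - t) ^ c * (1 + t) ^ d) x := by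
    simpa using intervalIntegral.integral_comp_mul_left (a := 0) (b := 1)
      (fun t => t ^ e * (w - t) ^ c * (1 + t) ^ d) hw.ne'
  have hcongr : ∀ x ∈ Set.uIcc (0:ℝ) 1,
      (fun t => t ^ e * (w - t) ^ c * (1 + t) ^ d) (w * x)
        = w ^ (e + c) * (x ^ e * (1 - x) ^ c * (1 + w * x) ^ d) := by
    intro x hx
    rw [Set.uIcc_of_le zero_le_one] at hx
    have hx0 : (0:ℝ) ≤ x := hx.1
    have hx1 : x ≤ 1 := hx.2
    have h1 : (w * x) ^ e = w ^ e * x ^ e := mul_rpow hw.le hx0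
    have h2 : (w - w * x) ^ c = w ^ c * (1 - x) ^ c := by
      rw [show w - w * x = w * (1 - x) by ring, mul_rpow hw.le (by linarith)]
    simp only [h1, h2, Real.rpow_add hw]
    ring
  have h2 : (∫ x in (0:ℝ)..1, (fun t => t ^ e * (w - t) ^ c * (1 + t) ^ d) (w * x))
      = w ^ (e + c) * ∫ x in (0:ℝ)..1, x ^ e * (1 - x) ^ c * (1 + w * x) ^ d := by
    rw [intervalIntegral.integral_congr hcongr]
    exact intervalIntegral.integral_const_mul _ _
  have h3 : (∫ x in (0:ℝ)..1, x ^ e * (1 - x) ^ c * (1 + w * x) ^ d)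
      = ∫ l in Set.Ioo (0:ℝ) 1, l ^ e * (1 - l) ^ c * (1 + w * l) ^ d := by
    rw [intervalIntegral.integral_of_le zero_le_one, MeasureTheory.integral_Ioc_eq_integral_Ioo]
  have h4 : (∫ x in (0:ℝ)..w, (fun t => t ^ e * (w - t) ^ c * (1 + t) ^ d) x)
      = ∫ t in Set.Ioo (0:ℝ) w, t ^ e * (w - t) ^ c * (1 + t) ^ d := by
    rw [intervalIntegral.integral_of_le hw.le, MeasureTheory.integral_Ioc_eq_integral_Ioo]
  have hwe : w ^ (e + c) ≠ 0 := ne_of_gt (rpow_pos_of_pos hw _)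
  rw [h2, h3, h4] at hkey
  rw [smul_eq_mul] at hkey
  field_simp at hkey ⊢
  have hlw : ∀ l : ℝ, l * w = w * l := fun l => mul_comm l w
  simp only [hlw] at hkey
  linarith [hkey]


lemma cross {β c d w₁ w₂ : ℝ} (hβ : 0 < β) (hc : 0 ≤ c) (hd : d ≤ 0)
    (hw₁ : 0 < w₁) (hw12 : w₁ ≤ w₂) :
    (∫ t in Set.Ioo (0:ℝ) w₁, t ^ β * (w₁ - t) ^ c * (1 + t) ^ d) *
        (∫ t in Set.Ioo (0:ℝ) w₂, t ^ (β - 1) * (w₂ - t) ^ c * (1 + t) ^ d)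
      ≤ (∫ t in Set.Ioo (0:ℝ) w₂, t ^ β * (w₂ - t) ^ c * (1 + t) ^ d) *
        (∫ t in Set.Ioo (0:ℝ) w₁, t ^ (β - 1) * (w₁ - t) ^ c * (1 + t) ^ d) := by
  have hw₂ : 0 < w₂ := lt_of_lt_of_le hw₁ hw12
  have he : (-1:ℝ) < β - 1 := by linarith
  set f₁ : ℝ → ℝ := fun t => t ^ (β - 1) * (w₁ - t) ^ c * (1 + t) ^ d with hf₁
  set f₂ : ℝ → ℝ := fun t => t ^ (β - 1) * (w₂ - t) ^ c * (1 + t) ^ d with hf₂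
  set g₁ : ℝ → ℝ := (Set.Ioo (0:ℝ) w₁).indicator f₁ with hg₁
  set g₂ : ℝ → ℝ := (Set.Ioo (0:ℝ) w₂).indicator f₂ with hg₂
  -- nonnegativity
  have hf₁nn : ∀ t ∈ Set.Ioo (0:ℝ) w₁, 0 ≤ f₁ t := by
    intro t ht
    have p1 : (0:ℝ) < t ^ (β-1) := rpow_pos_of_pos ht.1 _
    have p2 : (0:ℝ) < (w₁ - t) ^ c := rpow_pos_of_pos (by linarith [ht.2]) c
    have p3 : (0:ℝ) < (1 + t) ^ d := rpow_pos_of_pos (by linarith [ht.1]) d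
    positivity
  have hf₂nn : ∀ t ∈ Set.Ioo (0:ℝ) w₂, 0 ≤ f₂ t := by
    intro t ht
    have p1 : (0:ℝ) < t ^ (β-1) := rpow_pos_of_pos ht.1 _
    have p2 : (0:ℝ) < (w₂ - t) ^ c := rpow_pos_of_pos (by linarith [ht.2]) c
    have p3 : (0:ℝ) < (1 + t) ^ d := rpow_pos_of_pos (by linarith [ht.1]) d
    positivity
  have hg₁nn : ∀ t, 0 ≤ g₁ t := fun t => Set.indicator_nonneg hf₁nn t
  have hg₂nn : ∀ t, 0 ≤ g₂ t := fun t => Set.indicator_nonneg hf₂nn t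
  -- integrability
  have hint₁ : Integrable g₁ := by
    rw [hg₁, integrable_indicator_iff measurableSet_Ioo]
    exact integrableOn_aux hc hd he hw₁
  have hint₂ : Integrable g₂ := by
    rw [hg₂, integrable_indicator_iff measurableSet_Ioo]
    exact integrableOn_aux hc hd he hw₂
  have hmul₁ : (fun t => t * g₁ t) = (Set.Ioo (0:ℝ) w₁).indicator (fun t => t * f₁ t) := by
    funext t
    by_cases ht : t ∈ Set.Ioo (0:ℝ) w₁ <;>
      simp [hg₁, Set.indicator_of_mem, Set.indicator_of_notMem, ht]
  have hmul₂ : (fun t => t * g₂ t) = (Set.Ioo (0:ℝ) w₂).indicator (fun t => t * f₂ t) := by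
    funext t
    by_cases ht : t ∈ Set.Ioo (0:ℝ) w₂ <;>
      simp [hg₂, Set.indicator_of_mem, Set.indicator_of_notMem, ht]
  have hcongr₁ : Set.EqOn (fun t : ℝ => t ^ β * (w₁ - t) ^ c * (1 + t) ^ d)
      (fun t => t * f₁ t) (Set.Ioo (0:ℝ) w₁) := by
    intro t ht
    have hpow : t ^ β = t * t ^ (β - 1) := by
      have h := Real.rpow_add ht.1 1 (β - 1)
      rw [Real.rpow_one, show (1:ℝ) + (β - 1) = β by ring] at h
      exact h
    simp only [hf₁, hpow]
    ring
  have hcongr₂ : Set.EqOn (fun t : ℝ => t ^ β * (w₂ - t) ^ c * (1 + t) ^ d)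
      (fun t => t * f₂ t) (Set.Ioo (0:ℝ) w₂) := by
    intro t ht
    have hpow : t ^ β = t * t ^ (β - 1) := by
      have h := Real.rpow_add ht.1 1 (β - 1)
      rw [Real.rpow_one, show (1:ℝ) + (β - 1) = β by ring] at h
      exact h
    simp only [hf₂, hpow]
    ring
  have hint₁' : Integrable (fun t => t * g₁ t) := by
    rw [hmul₁, integrable_indicator_iff measurableSet_Ioo]
    exact ((integrableOn_aux hc hd (by linarith : (-1:ℝ) < β) hw₁).congr_fun hcongr₁
      measurableSet_Ioo)
  have hint₂' : Integrable (fun t => t * g₂ t) := by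
    rw [hmul₂, integrable_indicator_iff measurableSet_Ioo]
    exact ((integrableOn_aux hc hd (by linarith : (-1:ℝ) < β) hw₂).congr_fun hcongr₂
      measurableSet_Ioo)
  -- identification of the four integrals
  have hI10 : (∫ t, g₁ t) = ∫ t in Set.Ioo (0:ℝ) w₁, f₁ t := by
    rw [hg₁, MeasureTheory.integral_indicator measurableSet_Ioo]
  have hI20 : (∫ t, g₂ t) = ∫ t in Set.Ioo (0:ℝ) w₂, f₂ t := by
    rw [hg₂, MeasureTheory.integral_indicator measurableSet_Ioo]
  have hI11 : (∫ t, t * g₁ t) = ∫ t in Set.Ioo (0:ℝ) w₁, t ^ β * (w₁ - t) ^ c * (1 + t) ^ d := by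
    rw [hmul₁, MeasureTheory.integral_indicator measurableSet_Ioo]
    exact (setIntegral_congr_fun measurableSet_Ioo hcongr₁).symm
  have hI21 : (∫ t, t * g₂ t) = ∫ t in Set.Ioo (0:ℝ) w₂, t ^ β * (w₂ - t) ^ c * (1 + t) ^ d := by
    rw [hmul₂, MeasureTheory.integral_indicator measurableSet_Ioo]
    exact (setIntegral_congr_fun measurableSet_Ioo hcongr₂).symm
  set I10 := ∫ t, g₁ t with hI10d
  set I20 := ∫ t, g₂ t with hI20d
  set I11 := ∫ t, t * g₁ t with hI11d
  set I21 := ∫ t, t * g₂ t with hI21d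
  -- monotone likelihood ratio
  have hmlr : ∀ t u : ℝ, t ≤ u → g₁ u * g₂ t ≤ g₁ t * g₂ u := by
    intro t u htu
    by_cases hu : u ∈ Set.Ioo (0:ℝ) w₁
    · by_cases ht : t ∈ Set.Ioo (0:ℝ) w₂
      · have ht1 : t ∈ Set.Ioo (0:ℝ) w₁ := ⟨ht.1, lt_of_le_of_lt htu hu.2⟩
        have hu2 : u ∈ Set.Ioo (0:ℝ) w₂ := ⟨hu.1, lt_of_lt_of_le hu.2 hw12⟩
        rw [hg₁, hg₂, Set.indicator_of_mem hu f₁, Set.indicator_of_mem ht f₂,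
          Set.indicator_of_mem ht1 f₁, Set.indicator_of_mem hu2 f₂]
        have key : (w₁ - u) ^ c * (w₂ - t) ^ c ≤ (w₁ - t) ^ c * (w₂ - u) ^ c := by
          rw [← mul_rpow (by linarith [hu.2]) (by linarith [ht.2]),
            ← mul_rpow (by linarith [ht1.2]) (by linarith [hu2.2])]
          exact rpow_le_rpow (mul_nonneg (by linarith [hu.2]) (by linarith [ht.2]))
            (by nlinarith [hu.2, ht.2]) hc
        have q1 : (0:ℝ) < t ^ (β - 1) := rpow_pos_of_pos ht.1 _
        have q2 : (0:ℝ) < u ^ (β - 1) := rpow_pos_of_pos hu.1 _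
        have q3 : (0:ℝ) < (1 + t) ^ d := rpow_pos_of_pos (by linarith [ht.1]) d
        have q4 : (0:ℝ) < (1 + u) ^ d := rpow_pos_of_pos (by linarith [hu.1]) d
        have hX : (0:ℝ) < t ^ (β - 1) * u ^ (β - 1) * ((1 + t) ^ d * (1 + u) ^ d) := by
          positivity
        calc f₁ u * f₂ t
            = (t ^ (β-1) * u ^ (β-1) * ((1+t) ^ d * (1+u) ^ d)) * ((w₁-u) ^ c * (w₂-t) ^ c) := by
              simp only [hf₁, hf₂]; ring
          _ ≤ (t ^ (β-1) * u ^ (β-1) * ((1+t) ^ d * (1+u) ^ d)) * ((w₁-t) ^ c * (w₂-u) ^ c) :=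
              mul_le_mul_of_nonneg_left key hX.le
          _ = f₁ t * f₂ u := by simp only [hf₁, hf₂]; ring
      · rw [hg₂, Set.indicator_of_notMem ht]
        simpa using mul_nonneg (hg₁nn t) (hg₂nn u)
    · rw [hg₁, Set.indicator_of_notMem hu]
      simpa using mul_nonneg (hg₁nn t) (hg₂nn u)
  -- pointwise kernel inequality
  have hker : ∀ u t : ℝ,
      0 ≤ (u * g₂ u * g₁ t + g₁ u * (t * g₂ t)) - (g₂ u * (t * g₁ t) + u * g₁ u * g₂ t) := by
    intro u t
    rcases le_total t u with h | h
    · nlinarith [mul_le_mul_of_nonneg_left (hmlr t u h) (sub_nonneg.2 h)]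
    · nlinarith [mul_le_mul_of_nonneg_left (hmlr u t h) (sub_nonneg.2 h)]
  -- inner integral computation
  have hinner : ∀ u : ℝ,
      (u * g₂ u * I10 + g₁ u * I21) - (g₂ u * I11 + u * g₁ u * I20)
        = ∫ t, ((u * g₂ u * g₁ t + g₁ u * (t * g₂ t)) - (g₂ u * (t * g₁ t) + u * g₁ u * g₂ t)) := by
    intro u
    have hA : Integrable (fun t => u * g₂ u * g₁ t + g₁ u * (t * g₂ t)) := by
      exact (hint₁.const_mul _).add (hint₂'.const_mul _)
    have hB : Integrable (fun t => g₂ u * (t * g₁ t) + u * g₁ u * g₂ t) := by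
      exact (hint₁'.const_mul _).add (hint₂.const_mul _)
    rw [MeasureTheory.integral_sub hA hB,
      MeasureTheory.integral_add (hint₁.const_mul _) (hint₂'.const_mul _),
      MeasureTheory.integral_add (hint₁'.const_mul _) (hint₂.const_mul _),
      MeasureTheory.integral_const_mul, MeasureTheory.integral_const_mul,
      MeasureTheory.integral_const_mul, MeasureTheory.integral_const_mul]
  have houter : (0:ℝ) ≤ ∫ u, ((u * g₂ u * I10 + g₁ u * I21) - (g₂ u * I11 + u * g₁ u * I20)) := by
    refine MeasureTheory.integral_nonneg fun u => ?_
    simp only [Pi.zero_apply]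
    rw [hinner u]
    exact MeasureTheory.integral_nonneg (hker u)
  have hsplit : (∫ u, ((u * g₂ u * I10 + g₁ u * I21) - (g₂ u * I11 + u * g₁ u * I20)))
      = (I21 * I10 + I10 * I21) - (I20 * I11 + I11 * I20) := by
    have hA : Integrable (fun u => u * g₂ u * I10 + g₁ u * I21) := by
      exact (hint₂'.mul_const _).add (hint₁.mul_const _)
    have hB : Integrable (fun u => g₂ u * I11 + u * g₁ u * I20) := by
      exact (hint₂.mul_const _).add (hint₁'.mul_const _)
    rw [MeasureTheory.integral_sub hA hB,
      MeasureTheory.integral_add (hint₂'.mul_const _) (hint₁.mul_const _),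
      MeasureTheory.integral_add (hint₂.mul_const _) (hint₁'.mul_const _),
      MeasureTheory.integral_mul_const, MeasureTheory.integral_mul_const,
      MeasureTheory.integral_mul_const, MeasureTheory.integral_mul_const]
  rw [← hI11, ← hI20, ← hI21, ← hI10]
  rw [hsplit] at houter
  linarith

end RshrinkAux

/-- The shrinkage factor `r(w)` of the generalized Bayes estimator `(1 - r(W)/W)X`,
`W = ‖X‖²/‖U‖²`, corresponding to the prior with density proportional to `η^a ‖θ‖^{-b}`:
`r(w) = w ⬝ [∫₀¹ λ^{b/2} (1-λ)^{p/2-b/2-1} (1+wλ)^{-k/2-a-b/2-2} dλ] /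
  [∫₀¹ λ^{b/2-1} (1-λ)^{p/2-b/2-1} (1+wλ)^{-k/2-a-b/2-2} dλ]`. -/
noncomputable def rshrink (p k : ℕ) (a b : ℝ) (w : ℝ) : ℝ :=
  w * (∫ l in Set.Ioo (0 : ℝ) 1,
        l ^ (b / 2) * (1 - l) ^ ((p : ℝ) / 2 - b / 2 - 1) *
          (1 + w * l) ^ (-(k : ℝ) / 2 - a - b / 2 - 2)) /
    ∫ l in Set.Ioo (0 : ℝ) 1,
      l ^ (b / 2 - 1) * (1 - l) ^ ((p : ℝ) / 2 - b / 2 - 1) *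
        (1 + w * l) ^ (-(k : ℝ) / 2 - a - b / 2 - 2)

/-- **Lemma 6.3, part 1**: for `0 < b ≤ p - 2` and `k/2 + a + 1 > 0`, the shrinkage factor
`r` is nondecreasing on `(0,∞)`. -/
theorem rshrink_monotone (p k : ℕ) (hp : 3 ≤ p) (hk : 1 ≤ k) (a b : ℝ)
    (hb0 : 0 < b) (hbp : b ≤ (p : ℝ) - 2) (ha : (k : ℝ) / 2 + a + 1 > 0) :
    MonotoneOn (rshrink p k a b) (Set.Ioi (0 : ℝ)) := by
  have hc : 0 ≤ (p : ℝ) / 2 - b / 2 - 1 := by linarith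
  have hd : -(k : ℝ) / 2 - a - b / 2 - 2 ≤ 0 := by linarith
  have he : (-1 : ℝ) < b / 2 - 1 := by linarith
  have req : ∀ w : ℝ, 0 < w → rshrink p k a b w =
      (∫ t in Set.Ioo (0:ℝ) w, t ^ (b / 2) * (w - t) ^ ((p : ℝ) / 2 - b / 2 - 1) *
          (1 + t) ^ (-(k : ℝ) / 2 - a - b / 2 - 2)) /
        ∫ t in Set.Ioo (0:ℝ) w, t ^ (b / 2 - 1) * (w - t) ^ ((p : ℝ) / 2 - b / 2 - 1) *
          (1 + t) ^ (-(k : ℝ) / 2 - a - b / 2 - 2) := by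
    intro w hw
    unfold rshrink
    rw [RshrinkAux.subst hw, RshrinkAux.subst hw]
    set c := (p : ℝ) / 2 - b / 2 - 1 with hcdef
    set J₁ := ∫ t in Set.Ioo (0:ℝ) w, t ^ (b / 2) * (w - t) ^ c *
      (1 + t) ^ (-(k : ℝ) / 2 - a - b / 2 - 2) with hJ₁
    set J₀ := ∫ t in Set.Ioo (0:ℝ) w, t ^ (b / 2 - 1) * (w - t) ^ c *
      (1 + t) ^ (-(k : ℝ) / 2 - a - b / 2 - 2) with hJ₀
    have hB : w ^ (b / 2 - 1 + c) ≠ 0 := ne_of_gt (rpow_pos_of_pos hw _)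
    have hw0 : w ≠ 0 := hw.ne'
    have hpow : w ^ (b / 2 + c) = w ^ (b / 2 - 1 + c) * w := by
      rw [show b / 2 + c = (b / 2 - 1 + c) + 1 by ring, Real.rpow_add hw, Real.rpow_one]
    rw [← mul_assoc, mul_div_mul_comm]
    have hone : w * (w ^ (b / 2 + c) * w)⁻¹ / (w ^ (b / 2 - 1 + c) * w)⁻¹ = 1 := by
      rw [hpow]
      field_simp
    rw [hone, one_mul]
  intro w₁ hw₁ w₂ hw₂ h12
  rw [Set.mem_Ioi] at hw₁ hw₂
  rw [req w₁ hw₁, req w₂ hw₂,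
    div_le_div_iff₀ (RshrinkAux.Jpos hc hd he hw₁) (RshrinkAux.Jpos hc hd he hw₂)]
  exact RshrinkAux.cross (by linarith : (0:ℝ) < b / 2) hc hd hw₁ h12
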